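/- arXiv:0712.2408 — 4 statements merged into one kernel-verified Lean document; each statement's English description precedes it below -/
import Mathlib

section
/- For every real number t in [-1, 1], with T_n denoting the monic Chebyshev polynomial T_n(2cos θ) = 2cos(nθ), we have T_2(t) + 2 = 4·sin²((1/3)·arcsin(√((T_6(t)+2)/4))). -/
/-- Monic Chebyshev polynomial of the first kind: `Tm n (2 cos θ) = 2 cos (n θ)`. -/
noncomputable def Tm (n : ℤ) (x : ℝ) : ℝ := 2 * (Polynomial.Chebyshev.T ℝ n).eval (x / 2)

theorem stmt_3 (t : ℝ) (ht : t ∈ Set.Icc (-1 : ℝ) 1) :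
    Tm 2 t + 2 =
      4 * Real.sin ((1 / 3) * Real.arcsin (Real.sqrt ((Tm 6 t + 2) / 4))) ^ 2 := by
  obtain ⟨h1, h2⟩ := ht
  have hT2 : Tm 2 t = t^2 - 2 := by
    simp [Tm, Polynomial.Chebyshev.T_two]; ring
  have hT6 : Tm 6 t = t^6 - 6*t^4 + 9*t^2 - 2 := by
    have e2 := Polynomial.Chebyshev.T_add_two ℝ 0
    have e3 := Polynomial.Chebyshev.T_add_two ℝ 1
    have e4 := Polynomial.Chebyshev.T_add_two ℝ 2
    have e5 := Polynomial.Chebyshev.T_add_two ℝ 3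
    have e6 := Polynomial.Chebyshev.T_add_two ℝ 4
    norm_num [Polynomial.Chebyshev.T_zero, Polynomial.Chebyshev.T_one] at *
    rw [Tm, e6, e5, e4, e3, e2]
    simp [Polynomial.eval_mul, Polynomial.eval_sub]
    ring
  set a := Real.arcsin (t/2) with ha
  have hsa : Real.sin a = t/2 := Real.sin_arcsin (by linarith) (by linarith)
  have hpi6 : Real.arcsin (1/2 : ℝ) = Real.pi/6 := by
    rw [show (1/2 : ℝ) = Real.sin (Real.pi/6) by rw [Real.sin_pi_div_six]]
    exact Real.arcsin_sin (by linarith [Real.pi_pos]) (by linarith [Real.pi_pos])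
  have hau : a ≤ Real.pi/6 := by
    rw [ha, ← hpi6]; exact Real.monotone_arcsin (by linarith)
  have hal : -(Real.pi/6) ≤ a := by
    rw [ha, ← hpi6, ← Real.arcsin_neg]
    exact Real.monotone_arcsin (by linarith)
  have hsin3 : Real.sin (3*a) = (3*t - t^3)/2 := by
    rw [Real.sin_three_mul, hsa]; ring
  have hval : (Tm 6 t + 2)/4 = Real.sin (3*a)^2 := by
    rw [hT6, hsin3]; ring
  rw [hT2, hval]
  rcases le_or_gt 0 a with hpos | hneg
  · have hs3nn : 0 ≤ Real.sin (3*a) := Real.sin_nonneg_of_nonneg_of_le_pi (by linarith)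
      (by nlinarith [Real.pi_pos])
    rw [Real.sqrt_sq hs3nn, Real.arcsin_sin (by linarith) (by linarith)]
    have : (1/3 : ℝ) * (3*a) = a := by ring
    rw [this, hsa]
    ring
  · have hs3 : Real.sqrt (Real.sin (3*a)^2) = Real.sin (-(3*a)) := by
      rw [Real.sin_neg, Real.sqrt_sq_eq_abs, abs_of_nonpos]
      exact Real.sin_nonpos_of_nonpos_of_neg_pi_le (by linarith) (by nlinarith [Real.pi_pos])
    rw [hs3, show -(3*a) = 3*(-a) by ring,
      Real.arcsin_sin (by linarith) (by linarith)]
    have : (1/3 : ℝ) * (3*(-a)) = -a := by ring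
    rw [this, Real.sin_neg, hsa]
    ring
end

section
/- Let φ_1 = 4/9 and φ_{n+1} = (2/9)·((3n+1)(3n-1))/((n+1)(2n+1))·φ_n for n ≥ 1. Then the sequence (φ_n)_{n≥1} is totally monotone: for every k ≥ 0 and every n ≥ 1, (-1)^k (Δ^k φ)_n > 0, where (Δf)_n = f_{n+1} - f_n. -/
/-- The coefficient sequence: `φ_1 = 4/9`,
`φ_{n+1} = (2/9)·((3n+1)(3n-1))/((n+1)(2n+1))·φ_n` for `n ≥ 1` (and `φ_0 = 0`). -/
noncomputable def phiSeq : ℕ → ℝ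
  | 0 => 0
  | 1 => 4 / 9
  | (n + 2) =>
      (2 / 9) * ((3 * ((n : ℝ) + 1) + 1) * (3 * ((n : ℝ) + 1) - 1))
        / ((((n : ℝ) + 1) + 1) * (2 * ((n : ℝ) + 1) + 1)) * phiSeq (n + 1)

/-- Forward difference operator `(Δ f)_n = f_{n+1} - f_n`. -/
def fdiff (f : ℕ → ℝ) : ℕ → ℝ := fun n => f (n + 1) - f n

/-- Gamma ratio family. -/
noncomputable def Fg (a b : ℝ) (n : ℕ) : ℝ := Real.Gamma (n + a) / Real.Gamma (n + b)

/-- Backward difference `(D f)_n = f_n - f_{n+1} = -(Δ f)_n`. -/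
def Dop (f : ℕ → ℝ) : ℕ → ℝ := fun n => f n - f (n + 1)

lemma Dop_iter_eq (k : ℕ) (f : ℕ → ℝ) : ∀ n, Dop^[k] f n = (-1) ^ k * (fdiff^[k] f) n := by
  induction k with
  | zero => intro n; simp
  | succ k ih =>
    intro n
    rw [Function.iterate_succ_apply', Function.iterate_succ_apply']
    simp only [Dop, fdiff]
    rw [ih n, ih (n + 1)]
    ring

lemma Dop_iter_comb : ∀ (k : ℕ) (c d : ℝ) (u v : ℕ → ℝ),
    Dop^[k] (fun m => c * u m + d * v m) = fun n => c * Dop^[k] u n + d * Dop^[k] v n := by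
  intro k
  induction k with
  | zero => intro c d u v; rfl
  | succ k ih =>
    intro c d u v
    rw [Function.iterate_succ_apply, Function.iterate_succ_apply, Function.iterate_succ_apply]
    have h : Dop (fun m => c * u m + d * v m) = fun m => c * Dop u m + d * Dop v m := by
      funext m; simp only [Dop]; ring
    rw [h, ih]

lemma Dop_iter_smul : ∀ (k : ℕ) (c : ℝ) (u : ℕ → ℝ),
    Dop^[k] (fun m => c * u m) = fun n => c * Dop^[k] u n := by
  intro k
  induction k with
  | zero => intro c u; rfl
  | succ k ih =>
    intro c u
    rw [Function.iterate_succ_apply, Function.iterate_succ_apply]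
    have h : Dop (fun m => c * u m) = fun m => c * Dop u m := by
      funext m; simp only [Dop]; ring
    rw [h, ih]

lemma Dop_iter_congr : ∀ (k : ℕ) (f g : ℕ → ℝ) (n : ℕ),
    (∀ m, n ≤ m → f m = g m) → Dop^[k] f n = Dop^[k] g n := by
  intro k
  induction k with
  | zero => intro f g n h; exact h n le_rfl
  | succ k ih =>
    intro f g n h
    rw [Function.iterate_succ_apply, Function.iterate_succ_apply]
    refine ih _ _ n (fun m hm => ?_)
    simp only [Dop]
    rw [h m hm, h (m + 1) (le_trans hm (Nat.le_succ m))]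

lemma Fg_pos {a b : ℝ} (ha : -1 < a) (hb : 0 < b) {n : ℕ} (hn : 1 ≤ n) : 0 < Fg a b n := by
  have h1 : (1 : ℝ) ≤ (n : ℝ) := by exact_mod_cast hn
  have hn0 : (0 : ℝ) ≤ (n : ℝ) := by positivity
  exact div_pos (Real.Gamma_pos_of_pos (by linarith)) (Real.Gamma_pos_of_pos (by linarith))

lemma Fg_step {a b : ℝ} (ha : ∀ n : ℕ, (n : ℝ) + a ≠ 0) (hb : 0 < b) (n : ℕ) :
    Fg a b n - Fg a b (n + 1) = (b - a) * Fg a (b + 1) n := by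
  have hn0 : (0 : ℝ) ≤ (n : ℝ) := by positivity
  have hnb : (0 : ℝ) < (n : ℝ) + b := by linarith
  have h1 : Real.Gamma ((n : ℝ) + 1 + a) = ((n : ℝ) + a) * Real.Gamma ((n : ℝ) + a) := by
    rw [show (n : ℝ) + 1 + a = ((n : ℝ) + a) + 1 by ring, Real.Gamma_add_one (ha n)]
  have h2 : Real.Gamma ((n : ℝ) + 1 + b) = ((n : ℝ) + b) * Real.Gamma ((n : ℝ) + b) := by
    rw [show (n : ℝ) + 1 + b = ((n : ℝ) + b) + 1 by ring, Real.Gamma_add_one hnb.ne']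
  have h3 : Real.Gamma ((n : ℝ) + (b + 1)) = ((n : ℝ) + b) * Real.Gamma ((n : ℝ) + b) := by
    rw [show (n : ℝ) + (b + 1) = ((n : ℝ) + b) + 1 by ring, Real.Gamma_add_one hnb.ne']
  have hGb : Real.Gamma ((n : ℝ) + b) ≠ 0 := (Real.Gamma_pos_of_pos hnb).ne'
  unfold Fg
  push_cast
  rw [h1, h2, h3]
  field_simp
  ring

lemma Fg_shift (a b : ℝ) (n : ℕ) : Fg a b (n + 1) = Fg (a + 1) (b + 1) n := by
  unfold Fg
  have e1 : ((n + 1 : ℕ) : ℝ) + a = (n : ℝ) + (a + 1) := by push_cast; ring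
  have e2 : ((n + 1 : ℕ) : ℝ) + b = (n : ℝ) + (b + 1) := by push_cast; ring
  rw [e1, e2]

lemma nz_of_good {a : ℝ} (ha : -1 < a) (ha0 : a ≠ 0) : ∀ m : ℕ, (m : ℝ) + a ≠ 0 := by
  intro m
  cases m with
  | zero => simpa using ha0
  | succ p =>
    have h1 : (1 : ℝ) ≤ ((p + 1 : ℕ) : ℝ) := by exact_mod_cast Nat.succ_le_succ (Nat.zero_le p)
    have : (0 : ℝ) < ((p + 1 : ℕ) : ℝ) + a := by linarith
    exact this.ne'

lemma key : ∀ (k : ℕ) (a1 b1 a2 b2 : ℝ), -1 < a1 → a1 ≠ 0 → a1 < b1 → 0 < b1 →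
    -1 < a2 → a2 ≠ 0 → a2 < b2 → 0 < b2 → ∀ n : ℕ, 1 ≤ n →
    0 < Dop^[k] (fun m => Fg a1 b1 m * Fg a2 b2 m) n := by
  intro k
  induction k with
  | zero =>
    intro a1 b1 a2 b2 h1 h2 h3 h4 h5 h6 h7 h8 n hn
    exact mul_pos (Fg_pos h1 h4 hn) (Fg_pos h5 h8 hn)
  | succ k ih =>
    intro a1 b1 a2 b2 h1 h2 h3 h4 h5 h6 h7 h8 n hn
    have hA1 := nz_of_good h1 h2
    have hA2 := nz_of_good h5 h6
    rw [Function.iterate_succ_apply]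
    have hD : Dop (fun m => Fg a1 b1 m * Fg a2 b2 m)
        = fun m => (b1 - a1) * (fun m => Fg a1 (b1 + 1) m * Fg a2 b2 m) m
            + (b2 - a2) * (fun m => Fg (a1 + 1) (b1 + 1) m * Fg a2 (b2 + 1) m) m := by
      funext m
      have e1 := Fg_step hA1 h4 m
      have e2 := Fg_step hA2 h8 m
      have e3 := Fg_shift a1 b1 m
      simp only [Dop]
      linear_combination Fg a2 b2 m * e1 + Fg a1 b1 (m + 1) * e2
        + (b2 - a2) * Fg a2 (b2 + 1) m * e3
    rw [hD, Dop_iter_comb]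
    have p1 : 0 < Dop^[k] (fun m => Fg a1 (b1 + 1) m * Fg a2 b2 m) n :=
      ih a1 (b1 + 1) a2 b2 h1 h2 (by linarith) (by linarith) h5 h6 h7 h8 n hn
    have p2 : 0 < Dop^[k] (fun m => Fg (a1 + 1) (b1 + 1) m * Fg a2 (b2 + 1) m) n :=
      ih (a1 + 1) (b1 + 1) a2 (b2 + 1) (by linarith) (by linarith : (0:ℝ) < a1 + 1).ne'
        (by linarith) (by linarith) h5 h6 (by linarith) (by linarith) n hn
    have c1 : 0 < b1 - a1 := by linarith
    have c2 : 0 < b2 - a2 := by linarith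
    exact add_pos (mul_pos c1 p1) (mul_pos c2 p2)

lemma Fg_succ {a b : ℝ} (n : ℕ) (ha : (n : ℝ) + a ≠ 0) (hb : 0 < (n : ℝ) + b) :
    Fg a b (n + 1) = (((n : ℝ) + a) / ((n : ℝ) + b)) * Fg a b n := by
  unfold Fg
  push_cast
  rw [show (n : ℝ) + 1 + a = ((n : ℝ) + a) + 1 by ring,
    show (n : ℝ) + 1 + b = ((n : ℝ) + b) + 1 by ring,
    Real.Gamma_add_one ha, Real.Gamma_add_one hb.ne']
  have hGb : Real.Gamma ((n : ℝ) + b) ≠ 0 := (Real.Gamma_pos_of_pos hb).ne'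
  field_simp

lemma prod_pos {n : ℕ} (hn : 1 ≤ n) :
    0 < Fg (1/3) 1 n * Fg (-(1/3)) (1/2) n :=
  mul_pos (Fg_pos (by norm_num) (by norm_num) hn) (Fg_pos (by norm_num) (by norm_num) hn)

lemma phi_eq (n : ℕ) (hn : 1 ≤ n) :
    phiSeq n = ((4 : ℝ) / 9) / (Fg (1/3) 1 1 * Fg (-(1/3)) (1/2) 1)
      * (Fg (1/3) 1 n * Fg (-(1/3)) (1/2) n) := by
  induction n with
  | zero => exact absurd hn (by norm_num)
  | succ m ih =>
    cases m with
    | zero =>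
      have hP : Fg (1/3) 1 1 * Fg (-(1/3)) (1/2) 1 ≠ 0 := (prod_pos le_rfl).ne'
      show phiSeq 1 = _
      simp only [phiSeq]
      exact (div_mul_cancel₀ _ hP).symm
    | succ p =>
      have ihp := ih (by omega)
      have hq : (1 : ℝ) ≤ ((p + 1 : ℕ) : ℝ) := by exact_mod_cast Nat.succ_le_succ (Nat.zero_le p)
      have r1 : Fg (1/3) 1 (p + 1 + 1)
          = ((((p + 1 : ℕ) : ℝ) + 1/3) / (((p + 1 : ℕ) : ℝ) + 1)) * Fg (1/3) 1 (p + 1) :=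
        Fg_succ (p + 1) (by linarith) (by linarith)
      have r2 : Fg (-(1/3)) (1/2) (p + 1 + 1)
          = ((((p + 1 : ℕ) : ℝ) + -(1/3)) / (((p + 1 : ℕ) : ℝ) + 1/2)) * Fg (-(1/3)) (1/2) (p + 1) :=
        Fg_succ (p + 1) (by linarith) (by linarith)
      show phiSeq (p + 2) = _
      simp only [phiSeq]
      rw [ihp, show p + 2 = p + 1 + 1 from rfl, r1, r2]
      push_cast
      have h1 : ((p : ℝ) + 1) + 1 ≠ 0 := by positivity
      have h2 : (2 : ℝ) * ((p : ℝ) + 1) + 1 ≠ 0 := by positivity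
      have h3 : ((p : ℝ) + 1) + 1/2 ≠ 0 := by positivity
      field_simp
      ring

theorem stmt_9 (k n : ℕ) (hn : 1 ≤ n) :
    0 < (-1 : ℝ) ^ k * (fdiff^[k] phiSeq) n := by
  rw [← Dop_iter_eq]
  set c : ℝ := ((4 : ℝ) / 9) / (Fg (1/3) 1 1 * Fg (-(1/3)) (1/2) 1) with hc
  have hcpos : 0 < c := div_pos (by norm_num) (prod_pos le_rfl)
  have hcongr : Dop^[k] phiSeq n
      = Dop^[k] (fun m => c * (fun m => Fg (1/3) 1 m * Fg (-(1/3)) (1/2) m) m) n :=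
    Dop_iter_congr k _ _ n (fun m hm => phi_eq m (le_trans hn hm))
  rw [hcongr, Dop_iter_smul]
  exact mul_pos hcpos
    (key k (1/3) 1 (-(1/3)) (1/2) (by norm_num) (by norm_num) (by norm_num) (by norm_num)
      (by norm_num) (by norm_num) (by norm_num) (by norm_num) n hn)
end

section
/- Define polynomials P_k by P_0 = 1 and P_{k+1}(X) = (X + k + 1)(2X + 2k + 1)·P_k(X) - 2(X² - 1/9)·P_k(X + 1). Then for every k ≥ 0 and every integer i with 0 ≤ i ≤ k, one has (-1)^i · P_k(-i) > 0. -/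
/-- `P_0 = 1`, `P_{k+1}(X) = (X+k+1)(2X+2k+1)·P_k(X) - 2(X² - 1/9)·P_k(X+1)`. -/
noncomputable def P : ℕ → Polynomial ℝ
  | 0 => 1
  | (k + 1) =>
      (Polynomial.X + Polynomial.C ((k : ℝ) + 1))
          * (2 * Polynomial.X + Polynomial.C (2 * (k : ℝ) + 1)) * P k
        - 2 * (Polynomial.X ^ 2 - Polynomial.C (1 / 9)) * (P k).comp (Polynomial.X + 1)

lemma evalP (k : ℕ) (x : ℝ) :
    (P (k + 1)).eval x
      = (x + (k : ℝ) + 1) * (2 * x + 2 * (k : ℝ) + 1) * (P k).eval x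
        - 2 * (x ^ 2 - 1 / 9) * (P k).eval (x + 1) := by
  show (((Polynomial.X + Polynomial.C ((k : ℝ) + 1))
          * (2 * Polynomial.X + Polynomial.C (2 * (k : ℝ) + 1)) * P k
        - 2 * (Polynomial.X ^ 2 - Polynomial.C (1 / 9)) * (P k).comp (Polynomial.X + 1))).eval x = _
  simp only [Polynomial.eval_sub, Polynomial.eval_mul, Polynomial.eval_add, Polynomial.eval_pow,
    Polynomial.eval_X, Polynomial.eval_C, Polynomial.eval_comp, Polynomial.eval_one,
    Polynomial.eval_ofNat]
  ring

lemma evalP0 (x : ℝ) : (P 0).eval x = 1 := by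
  show (1 : Polynomial ℝ).eval x = 1
  simp

lemma star (k : ℕ) (x : ℝ) :
    (P (k + 1)).eval (x + 1)
      = (P (k + 1)).eval x + ((k : ℝ) + 1) * (2 * (k : ℝ) + 3) * (P k).eval (x + 1) := by
  induction k generalizing x with
  | zero =>
      have h1 := evalP 0 (x + 1)
      have h2 := evalP 0 x
      simp only [evalP0] at h1 h2 ⊢
      push_cast at h1 h2 ⊢
      linear_combination h1 - h2
  | succ k IH =>
      have h1 := evalP (k + 1) (x + 1)
      have h2 := evalP (k + 1) x
      have h3 := IH x
      have h4 := IH (x + 1)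
      have h5 := evalP k (x + 1)
      rw [show x + 1 + 1 = x + 2 by ring] at h1 h4 h5
      push_cast at h1 h2 h3 h4 h5 ⊢
      linear_combination h1 - h2 + ((x + (k : ℝ) + 2) * (2 * x + 2 * (k : ℝ) + 3)) * h3
        - (2 * ((x + 1) ^ 2 - 1 / 9)) * h4 - (((k : ℝ) + 1) * (2 * (k : ℝ) + 3)) * h5

lemma main (k : ℕ) :
    (∀ i ≤ k, 0 < (-1 : ℝ) ^ i * (P k).eval (-(i : ℝ))) ∧ 0 < (P k).eval 1 := by
  induction k with
  | zero =>
      refine ⟨?_, by rw [evalP0]; norm_num⟩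
      intro i hi
      interval_cases i
      rw [evalP0]; norm_num
  | succ k IH =>
      obtain ⟨IH1, IH2⟩ := IH
      have ha0 := IH1 0 (Nat.zero_le _)
      norm_num at ha0
      have h0 : 0 < (P (k + 1)).eval 0 := by
        have h := evalP k 0
        rw [show (0 : ℝ) + 1 = 1 by ring] at h
        nlinarith [IH2, ha0, sq_nonneg ((k : ℝ))]
      have hb : 0 < (P (k + 1)).eval 1 := by
        have hs := star k 0
        rw [show (0 : ℝ) + 1 = 1 by ring] at hs
        nlinarith [IH2, h0, sq_nonneg ((k : ℝ))]
      refine ⟨?_, hb⟩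
      intro i hi
      match i with
      | 0 => simpa using h0
      | (j + 1) =>
        have hj : j ≤ k := Nat.succ_le_succ_iff.mp hi
        have h := evalP k (-((j : ℝ) + 1))
        rw [show -((j : ℝ) + 1) + 1 = -(j : ℝ) by ring] at h
        have ha := IH1 j hj
        have key : (-1 : ℝ) ^ (j + 1) * (P (k + 1)).eval (-((j : ℝ) + 1))
            = ((k : ℝ) - j) * (2 * (k : ℝ) - 2 * j - 1)
                * ((-1 : ℝ) ^ (j + 1) * (P k).eval (-((j : ℝ) + 1)))
              + 2 * (((j : ℝ) + 1) ^ 2 - 1 / 9) * ((-1 : ℝ) ^ j * (P k).eval (-(j : ℝ))) := by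
          rw [h, pow_succ]
          ring
        have hcast : (-(((j : ℕ) + 1 : ℕ) : ℝ)) = -((j : ℝ) + 1) := by push_cast; ring
        rw [hcast, key]
        have hterm2 : 0 < 2 * (((j : ℝ) + 1) ^ 2 - 1 / 9) * ((-1 : ℝ) ^ j * (P k).eval (-(j : ℝ))) := by
          have : (0 : ℝ) < ((j : ℝ) + 1) ^ 2 - 1 / 9 := by
            have hj0 : (0 : ℝ) ≤ (j : ℝ) := Nat.cast_nonneg j
            nlinarith
          positivity
        rcases lt_or_eq_of_le hj with hlt | heq
        · have ha2 := IH1 (j + 1) hlt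
          have hc1 : (1 : ℝ) ≤ (k : ℝ) - j := by
            have : (j : ℝ) + 1 ≤ (k : ℝ) := by exact_mod_cast hlt
            linarith
          have hc2 : (1 : ℝ) ≤ 2 * (k : ℝ) - 2 * j - 1 := by linarith
          have hcast2 : (-(((j : ℕ) + 1 : ℕ) : ℝ)) = -((j : ℝ) + 1) := hcast
          rw [hcast2] at ha2
          nlinarith [mul_pos (mul_pos (lt_of_lt_of_le zero_lt_one hc1) (lt_of_lt_of_le zero_lt_one hc2)) ha2]
        · subst heq
          have : ((j : ℝ) - j) * (2 * (j : ℝ) - 2 * j - 1)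
              * ((-1 : ℝ) ^ (j + 1) * (P j).eval (-((j : ℝ) + 1))) = 0 := by ring
          rw [this]
          linarith

theorem stmt_11 (k i : ℕ) (hi : i ≤ k) :
    0 < (-1 : ℝ) ^ i * (P k).eval (-(i : ℝ)) := by
  exact (main k).1 i hi
end

section
/- Let φ_1 = 4/9 and φ_{n+1} = (2/9)·((3n+1)(3n-1))/((n+1)(2n+1))·φ_n for n ≥ 1. Then Σ_{n≥1} φ_n = 1, i.e., the power series for φ(u) = 4·sin²((1/3)·arcsin(√u)) converges at u = 1 with sum φ(1) = 1. -/
lemma phiSeq_zero : phiSeq 0 = 0 := rfl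
lemma phiSeq_one : phiSeq 1 = 4 / 9 := rfl

/-- clean recurrence, no division -/
lemma phiSeq_rec (n : ℕ) (hn : 1 ≤ n) :
    9 * ((n : ℝ) + 1) * (2 * n + 1) * phiSeq (n + 1)
      = 2 * (9 * (n : ℝ) ^ 2 - 1) * phiSeq n := by
  obtain ⟨m, rfl⟩ : ∃ m, n = m + 1 := ⟨n - 1, by omega⟩
  rw [show phiSeq (m + 1 + 1) =
      (2 / 9) * ((3 * ((m : ℝ) + 1) + 1) * (3 * ((m : ℝ) + 1) - 1))
        / ((((m : ℝ) + 1) + 1) * (2 * ((m : ℝ) + 1) + 1)) * phiSeq (m + 1) from rfl]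
  have h1 : (((m : ℝ) + 1) + 1) ≠ 0 := by positivity
  have h2 : (2 * ((m : ℝ) + 1) + 1) ≠ 0 := by positivity
  push_cast
  field_simp
  ring

lemma phiSeq_nonneg (n : ℕ) : 0 ≤ phiSeq n := by
  induction n using Nat.strong_induction_on with
  | _ n ih =>
    match n with
    | 0 => simp [phiSeq_zero]
    | 1 => norm_num [phiSeq_one]
    | (m + 2) =>
      have h := ih (m + 1) (by omega)
      show 0 ≤ (2 / 9) * ((3 * ((m : ℝ) + 1) + 1) * (3 * ((m : ℝ) + 1) - 1))
        / ((((m : ℝ) + 1) + 1) * (2 * ((m : ℝ) + 1) + 1)) * phiSeq (m + 1)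
      have hm : (0:ℝ) ≤ (m:ℝ) := Nat.cast_nonneg m
      have : (0:ℝ) ≤ (2 / 9) * ((3 * ((m : ℝ) + 1) + 1) * (3 * ((m : ℝ) + 1) - 1))
          / ((((m : ℝ) + 1) + 1) * (2 * ((m : ℝ) + 1) + 1)) := by
        apply div_nonneg (by nlinarith) (by nlinarith)
      exact mul_nonneg this h

lemma phiSeq_sq_bound (n : ℕ) : phiSeq n ^ 2 * (n : ℝ) ^ 3 ≤ 16 / 81 := by
  induction n using Nat.strong_induction_on with
  | _ n ih =>
    match n with
    | 0 => norm_num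
    | 1 => norm_num [phiSeq_one]
    | (m + 2) =>
      have hrec := phiSeq_rec (m + 1) (by omega)
      have ihm := ih (m + 1) (by omega)
      have hnn := phiSeq_nonneg (m + 1)
      set x : ℝ := (m : ℝ) + 1 with hx
      have hm0 : (0:ℝ) ≤ (m:ℝ) := Nat.cast_nonneg m
      have hx1 : (1:ℝ) ≤ x := by rw [hx]; linarith
      have hden : 9 * (x + 1) * (2 * x + 1) > 0 := by nlinarith [hx1]
      have heq : phiSeq (m + 2) = 2 * (9 * x ^ 2 - 1) * phiSeq (m + 1) / (9 * (x + 1) * (2 * x + 1)) := by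
        have hrec' : 9 * (x + 1) * (2 * x + 1) * phiSeq (m + 2) = 2 * (9 * x ^ 2 - 1) * phiSeq (m + 1) := by
          rw [hx]
          convert hrec using 2 <;> [skip; norm_num] <;> push_cast <;> ring
        rw [eq_div_iff (ne_of_gt hden)]
        linarith [hrec']
      rw [heq]
      have hcast : ((m + 2 : ℕ) : ℝ) = x + 1 := by push_cast [hx]; ring
      rw [hcast, div_pow, div_mul_eq_mul_div, div_le_iff₀ (by positivity)]
      have key : (2 * (9 * x ^ 2 - 1)) ^ 2 * (x + 1) ^ 3 ≤ (9 * (x + 1) * (2 * x + 1)) ^ 2 * x ^ 3 := by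
        nlinarith [sq_nonneg x, sq_nonneg (x - 1), hx1]
      calc (2 * (9 * x ^ 2 - 1) * phiSeq (m + 1)) ^ 2 * (x + 1) ^ 3
          = phiSeq (m + 1) ^ 2 * ((2 * (9 * x ^ 2 - 1)) ^ 2 * (x + 1) ^ 3) := by ring
        _ ≤ phiSeq (m + 1) ^ 2 * ((9 * (x + 1) * (2 * x + 1)) ^ 2 * x ^ 3) := by
            apply mul_le_mul_of_nonneg_left key (sq_nonneg _)
        _ = phiSeq (m + 1) ^ 2 * x ^ 3 * (9 * (x + 1) * (2 * x + 1)) ^ 2 := by ring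
        _ ≤ 16 / 81 * (9 * (x + 1) * (2 * x + 1)) ^ 2 := by
            apply mul_le_mul_of_nonneg_right _ (sq_nonneg _)
            calc phiSeq (m + 1) ^ 2 * x ^ 3 = phiSeq (m + 1) ^ 2 * ((m + 1 : ℕ) : ℝ) ^ 3 := by
                  push_cast [hx]; ring
              _ ≤ 16 / 81 := ihm

lemma phiSeq_le_aux (n : ℕ) (hn : 1 ≤ n) :
    phiSeq n ≤ 4 / 9 * (((n : ℝ) ^ (3/2 : ℝ))⁻¹) := by
  have hn0 : (0:ℝ) < (n:ℝ) := by exact_mod_cast hn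
  have hr : (0:ℝ) < (n:ℝ) ^ (3/2 : ℝ) := Real.rpow_pos_of_pos hn0 _
  have key : phiSeq n * (n:ℝ) ^ (3/2 : ℝ) ≤ 4 / 9 := by
    have hsq : (phiSeq n * (n:ℝ) ^ (3/2 : ℝ)) ^ 2 ≤ (4/9 : ℝ) ^ 2 := by
      have h2 : ((n:ℝ) ^ (3/2 : ℝ)) ^ 2 = (n:ℝ) ^ 3 := by
        rw [← Real.rpow_natCast ((n:ℝ) ^ (3/2:ℝ)) 2, ← Real.rpow_mul hn0.le,
          show (3/2:ℝ) * ((2:ℕ):ℝ) = ((3:ℕ):ℝ) by norm_num, Real.rpow_natCast]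
      calc (phiSeq n * (n:ℝ) ^ (3/2 : ℝ)) ^ 2 = phiSeq n ^ 2 * ((n:ℝ) ^ (3/2:ℝ)) ^ 2 := by ring
        _ = phiSeq n ^ 2 * (n:ℝ) ^ 3 := by rw [h2]
        _ ≤ 16/81 := phiSeq_sq_bound n
        _ = (4/9:ℝ)^2 := by norm_num
    nlinarith [mul_nonneg (phiSeq_nonneg n) hr.le]
  calc phiSeq n = phiSeq n * (n:ℝ) ^ (3/2 : ℝ) * ((n:ℝ) ^ (3/2 : ℝ))⁻¹ := by
        field_simp
    _ ≤ 4 / 9 * ((n:ℝ) ^ (3/2 : ℝ))⁻¹ := by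
        apply mul_le_mul_of_nonneg_right key (by positivity)

lemma summable_phiSeq : Summable phiSeq := by
  apply Summable.of_nonneg_of_le phiSeq_nonneg (fun n => ?_)
    (((Real.summable_nat_rpow_inv (p := 3/2)).2 (by norm_num)).mul_left (4/9))
  match n with
  | 0 => simp [phiSeq_zero, Real.zero_rpow (by norm_num : (3/2:ℝ) ≠ 0)]
  | (m + 1) => exact phiSeq_le_aux (m+1) (by omega)

lemma phiSeq_le (n : ℕ) : phiSeq n ≤ 4 / 9 := by
  match n with
  | 0 => norm_num [phiSeq_zero]
  | (m + 1) =>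
    refine (phiSeq_le_aux (m+1) (by omega)).trans ?_
    have h1 : (1:ℝ) ≤ ((m+1 : ℕ):ℝ) ^ (3/2 : ℝ) := by
      apply Real.one_le_rpow (by exact_mod_cast Nat.one_le_iff_ne_zero.2 (by omega)) (by norm_num)
    have h2 : ((((m+1 : ℕ)):ℝ) ^ (3/2 : ℝ))⁻¹ ≤ 1 := inv_le_one_of_one_le₀ h1
    nlinarith [h2]

noncomputable def Fp (x : ℝ) : ℝ := ∑' n : ℕ, phiSeq n * x ^ n
noncomputable def Fp1 (x : ℝ) : ℝ := ∑' n : ℕ, phiSeq n * ((n : ℝ) * x ^ (n - 1))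
noncomputable def Fp2 (x : ℝ) : ℝ :=
  ∑' n : ℕ, phiSeq n * ((n : ℝ) * (((n - 1 : ℕ) : ℝ) * x ^ (n - 1 - 1)))

lemma summable_master {x : ℝ} (hx : |x| < 1) (f : ℕ → ℝ) (a b c : ℝ)
    (h : ∀ n : ℕ, |f n| ≤ (a * (n:ℝ)^2 + b * (n:ℝ) + c) * |x|^n) : Summable f := by
  have hx' : ‖|x|‖ < 1 := by rwa [Real.norm_eq_abs, abs_abs]
  have h2 := summable_pow_mul_geometric_of_norm_lt_one (R := ℝ) 2 hx'
  have h1 := summable_pow_mul_geometric_of_norm_lt_one (R := ℝ) 1 hx'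
  have h0 := summable_pow_mul_geometric_of_norm_lt_one (R := ℝ) 0 hx'
  have hg : Summable (fun n : ℕ => (a * (n:ℝ)^2 + b * (n:ℝ) + c) * |x|^n) := by
    have := ((h2.mul_left a).add (h1.mul_left b)).add (h0.mul_left c)
    exact this.congr (fun n => by push_cast; ring)
  exact Summable.of_norm_bounded hg (fun n => by rw [Real.norm_eq_abs]; exact h n)

lemma summable_S0 {x : ℝ} (hx : |x| < 1) : Summable (fun n : ℕ => phiSeq n * x ^ n) := by
  apply summable_master hx _ 0 0 (4/9)
  intro n
  rw [abs_mul, abs_pow, abs_of_nonneg (phiSeq_nonneg n)]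
  have := phiSeq_le n
  nlinarith [pow_nonneg (abs_nonneg x) n, sq_nonneg (n:ℝ), Nat.cast_nonneg (α := ℝ) n]

lemma summable_S1 {x : ℝ} (hx : |x| < 1) :
    Summable (fun n : ℕ => phiSeq n * ((n : ℝ) * x ^ (n - 1))) := by
  apply (summable_nat_add_iff 1).1
  apply summable_master hx _ 0 (4/9) (4/9)
  intro n
  simp only [Nat.add_sub_cancel]
  rw [abs_mul, abs_mul, abs_pow, abs_of_nonneg (phiSeq_nonneg _),
    abs_of_nonneg (by positivity : (0:ℝ) ≤ ((n+1 : ℕ) : ℝ))]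
  have h1 := phiSeq_le (n+1)
  have h2 := phiSeq_nonneg (n+1)
  have h3 : (0:ℝ) ≤ |x|^n := pow_nonneg (abs_nonneg x) n
  push_cast
  calc phiSeq (n+1) * (((n:ℝ) + 1) * |x| ^ n) ≤ 4/9 * (((n:ℝ) + 1) * |x| ^ n) := by
        apply mul_le_mul_of_nonneg_right h1 (by positivity)
    _ = (0 * (n:ℝ)^2 + 4/9 * (n:ℝ) + 4/9) * |x|^n := by ring

lemma summable_S2 {x : ℝ} (hx : |x| < 1) :
    Summable (fun n : ℕ => phiSeq n * ((n : ℝ) * (((n - 1 : ℕ) : ℝ) * x ^ (n - 1 - 1)))) := by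
  apply (summable_nat_add_iff 2).1
  apply summable_master hx _ (4/9) (4/9 * 3) (4/9 * 2)
  intro n
  have he : n + 2 - 1 - 1 = n := by omega
  have he2 : n + 2 - 1 = n + 1 := by omega
  rw [he, he2, abs_mul, abs_mul, abs_mul, abs_pow, abs_of_nonneg (phiSeq_nonneg _),
    abs_of_nonneg (by positivity : (0:ℝ) ≤ ((n+2 : ℕ) : ℝ)),
    abs_of_nonneg (by positivity : (0:ℝ) ≤ ((n+1 : ℕ) : ℝ))]
  have h1 := phiSeq_le (n+2)
  have h2 := phiSeq_nonneg (n+2)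
  have h3 : (0:ℝ) ≤ |x|^n := pow_nonneg (abs_nonneg x) n
  push_cast
  calc phiSeq (n+2) * (((n:ℝ) + 2) * (((n:ℝ) + 1) * |x| ^ n))
      ≤ 4/9 * (((n:ℝ) + 2) * (((n:ℝ) + 1) * |x| ^ n)) := by
        apply mul_le_mul_of_nonneg_right h1 (by positivity)
    _ = (4/9 * (n:ℝ)^2 + 4/9 * 3 * (n:ℝ) + 4/9 * 2) * |x|^n := by ring

lemma summable_u1 {r : ℝ} (hr0 : 0 < r) (hr1 : r < 1) :
    Summable (fun n : ℕ => 4/9 * ((n:ℝ) * r ^ (n - 1))) := by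
  have hrabs : |r| < 1 := by rwa [abs_of_pos hr0]
  apply (summable_nat_add_iff 1).1
  apply summable_master hrabs _ 0 (4/9) (4/9)
  intro n
  simp only [Nat.add_sub_cancel]
  rw [abs_mul, abs_mul, abs_pow, abs_of_pos hr0, abs_of_nonneg (by norm_num : (0:ℝ) ≤ 4/9),
    abs_of_nonneg (by positivity : (0:ℝ) ≤ ((n+1 : ℕ) : ℝ)), ← abs_of_pos hr0]
  push_cast
  have h3 : (0:ℝ) ≤ |r|^n := pow_nonneg (abs_nonneg r) n
  calc 4/9 * (((n:ℝ) + 1) * |r| ^ n) = (0 * (n:ℝ)^2 + 4/9 * (n:ℝ) + 4/9) * |r|^n := by ring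
    _ ≤ (0 * (n:ℝ)^2 + 4/9 * (n:ℝ) + 4/9) * |r|^n := le_refl _

lemma summable_u2 {r : ℝ} (hr0 : 0 < r) (hr1 : r < 1) :
    Summable (fun n : ℕ => 4/9 * ((n:ℝ) * ((n:ℝ) * r ^ (n - 1 - 1)))) := by
  have hrabs : |r| < 1 := by rwa [abs_of_pos hr0]
  apply (summable_nat_add_iff 2).1
  apply summable_master hrabs _ (4/9) (16/9) (16/9)
  intro n
  have he : n + 2 - 1 - 1 = n := by omega
  rw [he, abs_mul, abs_mul, abs_mul, abs_pow, abs_of_pos hr0,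
    abs_of_nonneg (by norm_num : (0:ℝ) ≤ 4/9),
    abs_of_nonneg (by positivity : (0:ℝ) ≤ ((n+2 : ℕ) : ℝ)), ← abs_of_pos hr0]
  push_cast
  have h3 : (0:ℝ) ≤ |r|^n := pow_nonneg (abs_nonneg r) n
  nlinarith [Nat.cast_nonneg (α := ℝ) n, sq_nonneg ((n:ℝ))]

lemma hasDerivAt_Fp {x : ℝ} (hx : |x| < 1) : HasDerivAt Fp (Fp1 x) x := by
  set r : ℝ := (|x| + 1) / 2 with hrdef
  have hxr : |x| < r := by rw [hrdef]; linarith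
  have hr0 : 0 < r := lt_of_le_of_lt (abs_nonneg x) hxr
  have hr1 : r < 1 := by rw [hrdef]; linarith
  have hmem : x ∈ Set.Ioo (-r) r := by constructor <;> [linarith [neg_abs_le x]; linarith [le_abs_self x]]
  exact hasDerivAt_tsum_of_isPreconnected (summable_u1 hr0 hr1) isOpen_Ioo
    (convex_Ioo _ _).isPreconnected
    (fun n y _ => (hasDerivAt_pow n y).const_mul (phiSeq n))
    (fun n y hy => by
      have hyr : |y| ≤ r := by
        rw [abs_le]; exact ⟨hy.1.le, hy.2.le⟩
      rw [Real.norm_eq_abs, abs_mul, abs_mul, abs_pow,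
        abs_of_nonneg (phiSeq_nonneg n), abs_of_nonneg (Nat.cast_nonneg n)]
      gcongr <;> first | exact phiSeq_le n | exact hyr | positivity)
    hmem (summable_S0 hx) hmem

lemma hasDerivAt_Fp1 {x : ℝ} (hx : |x| < 1) : HasDerivAt Fp1 (Fp2 x) x := by
  set r : ℝ := (|x| + 1) / 2 with hrdef
  have hxr : |x| < r := by rw [hrdef]; linarith
  have hr0 : 0 < r := lt_of_le_of_lt (abs_nonneg x) hxr
  have hr1 : r < 1 := by rw [hrdef]; linarith
  have hmem : x ∈ Set.Ioo (-r) r := by constructor <;> [linarith [neg_abs_le x]; linarith [le_abs_self x]]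
  exact hasDerivAt_tsum_of_isPreconnected (summable_u2 hr0 hr1) isOpen_Ioo
    (convex_Ioo _ _).isPreconnected
    (fun n y _ => ((hasDerivAt_pow (n-1) y).const_mul ((n:ℝ))).const_mul (phiSeq n))
    (fun n y hy => by
      have hyr : |y| ≤ r := by
        rw [abs_le]; exact ⟨hy.1.le, hy.2.le⟩
      rw [Real.norm_eq_abs, abs_mul, abs_mul, abs_mul, abs_pow,
        abs_of_nonneg (phiSeq_nonneg n), abs_of_nonneg (Nat.cast_nonneg n),
        abs_of_nonneg (Nat.cast_nonneg (n-1))]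
      gcongr <;>
        first | exact phiSeq_le n | exact hyr | positivity | exact_mod_cast Nat.sub_le n 1)
    hmem (summable_S1 hx) hmem

lemma psi_eq (x : ℝ) (n : ℕ) :
    2*x*(1-x)*(phiSeq n * ((n:ℝ) * (((n - 1 : ℕ):ℝ) * x^(n-1-1))))
      + ((1-2*x)*(phiSeq n * ((n:ℝ) * x^(n-1))) + 2/9*(phiSeq n * x^n))
    = (n:ℝ)*(2*(n:ℝ)-1)*phiSeq n * x^(n-1) - 2/9*(9*(n:ℝ)^2-1)*phiSeq n * x^n := by
  match n with
  | 0 => simp [phiSeq_zero]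
  | 1 => norm_num; ring
  | (m+2) =>
    have h1 : m+2-1-1 = m := by omega
    have h2 : m+2-1 = m+1 := by omega
    rw [h1, h2]
    push_cast
    ring

lemma summable_SA {x : ℝ} (hx : |x| < 1) :
    Summable (fun n : ℕ => (n:ℝ)*(2*(n:ℝ)-1)*phiSeq n * x^(n-1)) := by
  apply (summable_nat_add_iff 1).1
  apply summable_master hx _ (8/9) (12/9) (4/9)
  intro n
  simp only [Nat.add_sub_cancel]
  have h1 := phiSeq_le (n+1)
  have h2 := phiSeq_nonneg (n+1)
  have h3 : (0:ℝ) ≤ |x|^n := pow_nonneg (abs_nonneg x) n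
  rw [abs_mul, abs_pow, abs_mul, abs_mul]
  push_cast
  rw [abs_of_nonneg (by positivity : (0:ℝ) ≤ (n:ℝ)+1),
    abs_of_nonneg (by nlinarith [Nat.cast_nonneg (α := ℝ) n] : (0:ℝ) ≤ 2*((n:ℝ)+1)-1),
    abs_of_nonneg h2]
  calc ((n:ℝ)+1) * (2*((n:ℝ)+1)-1) * phiSeq (n+1) * |x|^n
      ≤ ((n:ℝ)+1) * (2*((n:ℝ)+1)-1) * (4/9) * |x|^n := by
        have : (0:ℝ) ≤ ((n:ℝ)+1) * (2*((n:ℝ)+1)-1) := by nlinarith [Nat.cast_nonneg (α := ℝ) n]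
        apply mul_le_mul_of_nonneg_right _ h3
        nlinarith
    _ = (8/9 * (n:ℝ)^2 + 12/9 * (n:ℝ) + 4/9) * |x|^n := by ring

lemma summable_SB {x : ℝ} (hx : |x| < 1) :
    Summable (fun n : ℕ => 2/9*(9*(n:ℝ)^2-1)*phiSeq n * x^n) := by
  apply summable_master hx _ (8/9) 0 (8/81)
  intro n
  have h1 := phiSeq_le n
  have h2 := phiSeq_nonneg n
  have h3 : (0:ℝ) ≤ |x|^n := pow_nonneg (abs_nonneg x) n
  have h4 : (0:ℝ) ≤ (n:ℝ) := Nat.cast_nonneg n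
  rw [abs_mul, abs_pow, abs_mul, abs_of_nonneg h2]
  have h5 : |2/9*(9*(n:ℝ)^2-1)| ≤ 2/9*(9*(n:ℝ)^2+1) := by
    rw [abs_mul, abs_of_nonneg (by norm_num : (0:ℝ) ≤ 2/9)]
    apply mul_le_mul_of_nonneg_left _ (by norm_num)
    rw [abs_le]; constructor <;> nlinarith [sq_nonneg (n:ℝ)]
  calc |2/9*(9*(n:ℝ)^2-1)| * phiSeq n * |x|^n
      ≤ (2/9*(9*(n:ℝ)^2+1)) * (4/9) * |x|^n := by
        apply mul_le_mul_of_nonneg_right _ h3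
        apply mul_le_mul h5 h1 h2 (by nlinarith [sq_nonneg (n:ℝ)])
    _ = (8/9 * (n:ℝ)^2 + 0 * (n:ℝ) + 8/81) * |x|^n := by ring

lemma Fp_ode {x : ℝ} (hx : |x| < 1) :
    2*x*(1-x)*Fp2 x + (1-2*x)*Fp1 x + 2/9*Fp x = 4/9 := by
  have S0 := summable_S0 hx
  have S1 := summable_S1 hx
  have S2 := summable_S2 hx
  have SA := summable_SA hx
  have SB := summable_SB hx
  have e2 : 2*x*(1-x)*Fp2 x = ∑' n : ℕ, 2*x*(1-x) * (phiSeq n * ((n:ℝ) * (((n-1:ℕ):ℝ) * x^(n-1-1)))) := by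
    rw [Fp2, tsum_mul_left]
  have e1 : (1-2*x)*Fp1 x = ∑' n : ℕ, (1-2*x) * (phiSeq n * ((n:ℝ) * x^(n-1))) := by
    rw [Fp1, tsum_mul_left]
  have e0 : 2/9*Fp x = ∑' n : ℕ, 2/9 * (phiSeq n * x^n) := by
    rw [Fp, tsum_mul_left]
  rw [e2, e1, e0, add_assoc, ← Summable.tsum_add (S1.mul_left _) (S0.mul_left _),
    ← Summable.tsum_add (S2.mul_left _) ((S1.mul_left _).add (S0.mul_left _))]
  rw [tsum_congr (psi_eq x), Summable.tsum_sub SA SB]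
  have SA' : Summable (fun n : ℕ => ((n:ℝ)+1)*(2*((n:ℝ)+1)-1)*phiSeq (n+1) * x^n) := by
    refine ((summable_nat_add_iff 1).2 SA).congr (fun n => ?_)
    simp only [Nat.add_sub_cancel]
    push_cast
    ring
  have hA : (∑' n : ℕ, (n:ℝ)*(2*(n:ℝ)-1)*phiSeq n * x^(n-1))
      = ∑' n : ℕ, ((n:ℝ)+1)*(2*((n:ℝ)+1)-1)*phiSeq (n+1) * x^n := by
    rw [Summable.tsum_eq_zero_add SA]
    simp only [Nat.cast_zero, Nat.cast_add, Nat.cast_one, Nat.add_sub_cancel]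
    norm_num
  rw [hA, ← Summable.tsum_sub SA' SB]
  rw [tsum_eq_single 0 (fun n hn => ?_)]
  · simp [phiSeq_one, phiSeq_zero]
    norm_num
  · have hrec := phiSeq_rec n (by omega)
    linear_combination (x^n / 9) * hrec

noncomputable def thA (x : ℝ) : ℝ := Real.arcsin (Real.sqrt x)
noncomputable def cG (x : ℝ) : ℝ := Real.cos (2/3 * thA x)
noncomputable def sG (x : ℝ) : ℝ := Real.sin (2/3 * thA x)
noncomputable def NN (x : ℝ) : ℝ :=
  (1 - Fp x / 2 - cG x)^2 + (3/2 * (Real.sqrt x * Real.sqrt (1-x)) * Fp1 x - sG x)^2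

lemma hasDerivAt_thA {x : ℝ} (hx : x ∈ Set.Ioo (0:ℝ) 1) :
    HasDerivAt thA (1 / (2 * Real.sqrt x * Real.sqrt (1 - x))) x := by
  obtain ⟨hx0, hx1⟩ := hx
  have ha : 0 < Real.sqrt x := Real.sqrt_pos.2 hx0
  have h1 : Real.sqrt x ≠ -1 := by linarith
  have h2 : Real.sqrt x ≠ 1 := by
    have : Real.sqrt x < 1 := by
      rw [show (1:ℝ) = Real.sqrt 1 from (Real.sqrt_one).symm]
      exact Real.sqrt_lt_sqrt hx0.le hx1
    linarith
  have hcomp := (Real.hasDerivAt_arcsin h1 h2).comp x (Real.hasDerivAt_sqrt (ne_of_gt hx0))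
  convert hcomp using 1
  · rfl
  · rfl
  · rfl
  rw [Real.sq_sqrt hx0.le]
  field_simp

lemma hasDerivAt_cG {x : ℝ} (hx : x ∈ Set.Ioo (0:ℝ) 1) :
    HasDerivAt cG (-sG x * (2/3 * (1 / (2 * Real.sqrt x * Real.sqrt (1 - x))))) x :=
  (Real.hasDerivAt_cos (2/3 * thA x)).comp x ((hasDerivAt_thA hx).const_mul (2/3))

lemma hasDerivAt_sG {x : ℝ} (hx : x ∈ Set.Ioo (0:ℝ) 1) :
    HasDerivAt sG (cG x * (2/3 * (1 / (2 * Real.sqrt x * Real.sqrt (1 - x))))) x :=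
  (Real.hasDerivAt_sin (2/3 * thA x)).comp x ((hasDerivAt_thA hx).const_mul (2/3))

lemma hasDerivAt_NN {x : ℝ} (hx : x ∈ Set.Ioo (0:ℝ) 1) : HasDerivAt NN 0 x := by
  obtain ⟨hx0, hx1⟩ := hx
  have hxabs : |x| < 1 := by rw [abs_of_pos hx0]; exact hx1
  have ha : 0 < Real.sqrt x := Real.sqrt_pos.2 hx0
  have hb : 0 < Real.sqrt (1-x) := Real.sqrt_pos.2 (by linarith)
  have ha2 : Real.sqrt x ^ 2 = x := Real.sq_sqrt hx0.le
  have hb2 : Real.sqrt (1-x) ^ 2 = 1 - x := Real.sq_sqrt (by linarith)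
  have hF := hasDerivAt_Fp hxabs
  have hF1 := hasDerivAt_Fp1 hxabs
  have hc := hasDerivAt_cG ⟨hx0, hx1⟩
  have hs := hasDerivAt_sG ⟨hx0, hx1⟩
  have hsb : HasDerivAt (fun y : ℝ => Real.sqrt (1 - y)) (1 / (2 * Real.sqrt (1-x)) * (-1)) x :=
    (Real.hasDerivAt_sqrt (by intro h; linarith)).comp x ((hasDerivAt_id x).const_sub 1)
  have hw : HasDerivAt (fun y : ℝ => Real.sqrt y * Real.sqrt (1 - y))
      (1 / (2 * Real.sqrt x) * Real.sqrt (1-x) + Real.sqrt x * (1 / (2 * Real.sqrt (1-x)) * (-1))) x :=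
    (Real.hasDerivAt_sqrt (ne_of_gt hx0)).mul hsb
  have hsig : HasDerivAt (fun y : ℝ => 3/2 * (Real.sqrt y * Real.sqrt (1 - y)) * Fp1 y)
      (3/2 * (1 / (2 * Real.sqrt x) * Real.sqrt (1-x) + Real.sqrt x * (1 / (2 * Real.sqrt (1-x)) * (-1))) * Fp1 x
        + 3/2 * (Real.sqrt x * Real.sqrt (1-x)) * Fp2 x) x :=
    (hw.const_mul (3/2)).mul hF1
  have hgam : HasDerivAt (fun y : ℝ => 1 - Fp y / 2 - cG y)
      (-(Fp1 x / 2) - (-sG x * (2/3 * (1 / (2 * Real.sqrt x * Real.sqrt (1 - x)))))) x := by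
    have h1 : HasDerivAt (fun y : ℝ => 1 - Fp y / 2) (-(Fp1 x / 2)) x := by
      have := (hF.div_const 2).const_sub 1
      convert this using 1
    exact h1.sub hc
  have hN := ((hgam.pow 2).add ((hsig.sub hs).pow 2))
  have hODE := Fp_ode hxabs
  convert hN using 1
  · rfl
  · rfl
  · rfl
  rw [show (2-1 : ℕ) = 1 from rfl]
  simp only [pow_one, Pi.sub_apply]
  have hane : Real.sqrt x ≠ 0 := ne_of_gt ha
  have hbne : Real.sqrt (1-x) ≠ 0 := ne_of_gt hb
  have hx0' : x ≠ 0 := ne_of_gt hx0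
  have hx1' : (1:ℝ) - x ≠ 0 := by intro h; linarith
  have hF2 : Fp2 x = (4/9 - (Real.sqrt (1-x)^2 - Real.sqrt x^2)*Fp1 x - 2/9*Fp x)
      / (2*Real.sqrt x^2*Real.sqrt (1-x)^2) := by
    rw [ha2, hb2, eq_div_iff (mul_ne_zero (mul_ne_zero two_ne_zero hx0') hx1')]
    linear_combination hODE
  rw [hF2]
  field_simp
  ring

lemma continuous_cG : Continuous cG := by
  unfold cG thA
  exact Real.continuous_cos.comp (continuous_const.mul (Real.continuous_arcsin.comp Real.continuous_sqrt))

lemma continuous_sG : Continuous sG := by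
  unfold sG thA
  exact Real.continuous_sin.comp (continuous_const.mul (Real.continuous_arcsin.comp Real.continuous_sqrt))

lemma NN_zero : NN 0 = 0 := by
  unfold NN cG sG thA Fp Fp1
  have h0 : (∑' n : ℕ, phiSeq n * (0:ℝ) ^ n) = 0 := by
    rw [tsum_eq_single 0 (fun n hn => by
      rw [zero_pow hn, mul_zero])]
    simp [phiSeq_zero]
  rw [h0]
  simp [Real.sqrt_zero, Real.arcsin_zero]

lemma tendsto_NN_zero : Filter.Tendsto NN (nhdsWithin 0 (Set.Ioi 0)) (nhds 0) := by
  have hFc : ContinuousAt Fp 0 := (hasDerivAt_Fp (by norm_num : |(0:ℝ)| < 1)).continuousAt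
  have hF1c : ContinuousAt Fp1 0 := (hasDerivAt_Fp1 (by norm_num : |(0:ℝ)| < 1)).continuousAt
  have hNNc : ContinuousAt NN 0 := by
    unfold NN
    exact (((continuousAt_const.sub (hFc.div_const 2)).sub continuous_cG.continuousAt).pow 2).add
      ((((continuous_const.mul (Real.continuous_sqrt.mul
          (Real.continuous_sqrt.comp (continuous_const.sub continuous_id)))).continuousAt.mul
        hF1c).sub continuous_sG.continuousAt).pow 2)
  have := hNNc.tendsto.mono_left (nhdsWithin_le_nhds (s := Set.Ioi (0:ℝ)))
  rwa [NN_zero] at this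

lemma NN_eq_zero {v : ℝ} (hv : v ∈ Set.Ioo (0:ℝ) 1) : NN v = 0 := by
  have hconst : ∀ u ∈ Set.Ioc (0:ℝ) v, NN v = NN u := by
    intro u hu
    have key := constant_of_has_deriv_right_zero (f := NN) (a := u) (b := v)
      (fun y hy => ((hasDerivAt_NN ⟨lt_of_lt_of_le hu.1 hy.1, lt_of_le_of_lt hy.2 hv.2⟩).continuousAt).continuousWithinAt)
      (fun y hy => (hasDerivAt_NN ⟨lt_of_lt_of_le hu.1 hy.1, lt_of_lt_of_le hy.2 (le_of_lt hv.2)⟩).hasDerivWithinAt)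
    exact key v ⟨hu.2, le_refl v⟩
  have hmem : Set.Ioc (0:ℝ) v ∈ nhdsWithin 0 (Set.Ioi 0) := Ioc_mem_nhdsGT_of_mem ⟨le_refl 0, hv.1⟩
  have htend : Filter.Tendsto NN (nhdsWithin 0 (Set.Ioi 0)) (nhds (NN v)) := by
    apply Filter.Tendsto.congr' _ (tendsto_const_nhds (α := ℝ) (x := NN v))
    exact Filter.eventuallyEq_of_mem hmem (fun u hu => hconst u hu)
  exact tendsto_nhds_unique htend tendsto_NN_zero

lemma Fp_eq_G {x : ℝ} (hx : x ∈ Set.Ioo (0:ℝ) 1) : Fp x = 2 - 2 * cG x := by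
  have h := NN_eq_zero hx
  unfold NN at h
  have h1 : (1 - Fp x / 2 - cG x) ^ 2 = 0 := by
    nlinarith [sq_nonneg (1 - Fp x / 2 - cG x),
      sq_nonneg (3/2 * (Real.sqrt x * Real.sqrt (1-x)) * Fp1 x - sG x)]
  have h2 : 1 - Fp x / 2 - cG x = 0 := by
    exact pow_eq_zero_iff (by norm_num) |>.1 h1
  linarith

theorem stmt_13 :
    HasSum phiSeq 1 ∧ 4 * Real.sin ((1 / 3) * Real.arcsin (Real.sqrt 1)) ^ 2 = 1 := by
  constructor
  · have hsum := summable_phiSeq.hasSum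
    have habel := Real.tendsto_tsum_powerSeries_nhdsWithin_lt hsum.tendsto_sum_nat
    have habel' : Filter.Tendsto Fp (nhdsWithin 1 (Set.Iio 1)) (nhds (∑' n, phiSeq n)) := habel
    have hG : Filter.Tendsto (fun x => 2 - 2 * cG x) (nhdsWithin 1 (Set.Iio 1)) (nhds 1) := by
      have hc : ContinuousAt (fun x => 2 - 2 * cG x) 1 :=
        continuousAt_const.sub (continuousAt_const.mul continuous_cG.continuousAt)
      have hval : 2 - 2 * cG 1 = 1 := by
        unfold cG thA
        rw [Real.sqrt_one, Real.arcsin_one, show (2/3) * (Real.pi/2) = Real.pi/3 by ring,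
          Real.cos_pi_div_three]
        norm_num
      have := hc.tendsto.mono_left (nhdsWithin_le_nhds (s := Set.Iio (1:ℝ)))
      rwa [hval] at this
    have hmem : Set.Ioo (0:ℝ) 1 ∈ nhdsWithin (1:ℝ) (Set.Iio 1) :=
      Ioo_mem_nhdsLT_of_mem ⟨by norm_num, le_refl 1⟩
    have heq : Filter.Tendsto Fp (nhdsWithin 1 (Set.Iio 1)) (nhds 1) := by
      apply hG.congr'
      exact Filter.eventuallyEq_of_mem hmem (fun u hu => (Fp_eq_G hu).symm)
    have : (∑' n, phiSeq n) = 1 := tendsto_nhds_unique habel' heq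
    rwa [this] at hsum
  · rw [Real.sqrt_one, Real.arcsin_one, show (1/3) * (Real.pi/2) = Real.pi/6 by ring,
      Real.sin_pi_div_six]
    norm_num
end
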